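/- Let (𝒟,K) and (𝒞,J) be small sites and p : 𝒟 ⥤ 𝒞 a comorphism of sites. Let C_p^* : Sheaf J ⥤ Sheaf K be the composite of the inclusion of J-sheaves into presheaves on 𝒞, precomposition with p.op, and K-sheafification. Then every object (F, E, α : F ⟶ C_p^*(E)) of the comma category Comma (𝟭 (Sheaf K)) C_p^* admits a jointly epimorphic family of morphisms ((g_i, h_i) : (F_i, E_i, α_i) ⟶ (F, E, α))_{i∈I} such that for every i, E_i is isomorphic to l_J(c_i) for some object c_i of 𝒞, and F_i is either an initial object of Sheaf K or isomorphic to l_K(d_i) for some object d_i of 𝒟. -/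

import Mathlib

open CategoryTheory Limits

universe u

/-- A family of morphisms `(e i : Xs i ⟶ X)` is jointly epimorphic. -/
def JointlyEpi {C : Type*} [Category C] {ι : Type*} {X : C} {Xs : ι → C}
    (e : ∀ i, Xs i ⟶ X) : Prop :=
  ∀ {Y : C} (a b : X ⟶ Y), (∀ i, e i ≫ a = e i ≫ b) → a = b

/-- A functor `p : (𝒟, K) ⥤ (𝒞, J)` is a comorphism of sites if for every `J`-covering sieve
`S` on `p(d)`, the sieve `{g | p(g) ∈ S}` is `K`-covering. -/
def IsComorphismOfSites {D : Type*} [Category D] {C : Type*} [Category C] (p : D ⥤ C)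
    (K : GrothendieckTopology D) (J : GrothendieckTopology C) : Prop :=
  ∀ (d : D) (S : Sieve (p.obj d)), S ∈ J (p.obj d) → S.functorPullback p ∈ K d

variable {D C : Type u} [SmallCategory D] [SmallCategory C]

/-- `l_J : 𝒞 ⥤ Sheaf J`, the Yoneda embedding followed by sheafification. -/
noncomputable def lSh (J : GrothendieckTopology C) : C ⥤ Sheaf J (Type u) :=
  yoneda ⋙ presheafToSheaf J (Type u)

/-- `C_p^* : Sheaf J ⥤ Sheaf K`, the composite of the inclusion of `J`-sheaves into
presheaves, precomposition with `p.op`, and `K`-sheafification. -/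
noncomputable def CpStar (p : D ⥤ C)
    (K : GrothendieckTopology D) (J : GrothendieckTopology C) :
    Sheaf J (Type u) ⥤ Sheaf K (Type u) :=
  sheafToPresheaf J (Type u) ⋙ (Functor.whiskeringLeft Dᵒᵖ Cᵒᵖ (Type u)).obj p.op ⋙
    presheafToSheaf K (Type u)

namespace CommaCoverAux

open Opposite

variable {E : Type u} [SmallCategory E] (L : GrothendieckTopology E)

/-- Maps out of a sheafified representable correspond to sections. -/
noncomputable def lShHomEquiv (G : Sheaf L (Type u)) (c : E) :
    ((lSh L).obj c ⟶ G) ≃ G.val.obj (op c) :=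
  ((sheafificationAdjunction L (Type u)).homEquiv (yoneda.obj c) G).trans yonedaEquiv

lemma lShHomEquiv_map_comp {c c' : E} (g : c' ⟶ c) {G : Sheaf L (Type u)}
    (a : (lSh L).obj c ⟶ G) :
    lShHomEquiv L G c' ((lSh L).map g ≫ a) = G.val.map g.op (lShHomEquiv L G c a) := by
  exact (congrArg yonedaEquiv (Adjunction.homEquiv_naturality_left
    (sheafificationAdjunction L (Type u)) (yoneda.map g) a)).trans (yonedaEquiv_naturality _ _).symm

lemma lShHomEquiv_comp_right {c : E} {G G' : Sheaf L (Type u)}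
    (a : (lSh L).obj c ⟶ G) (h : G ⟶ G') :
    lShHomEquiv L G' c (a ≫ h) = h.hom.app (op c) (lShHomEquiv L G c a) := by
  exact (congrArg yonedaEquiv (Adjunction.homEquiv_naturality_right
    (sheafificationAdjunction L (Type u)) a h)).trans (yonedaEquiv_comp _ _)

lemma lShHomEquiv_eq_app {c : E} {G : Sheaf L (Type u)} (γ : (lSh L).obj c ⟶ G) :
    lShHomEquiv L G c γ =
      γ.hom.app (op c) ((toSheafify L (yoneda.obj c)).app (op c) (𝟙 c)) := by
  exact (congrArg yonedaEquiv (Adjunction.homEquiv_unit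
    (adj := sheafificationAdjunction L (Type u)) (f := γ))).trans rfl

lemma hom_ext_of_lSh {G G' : Sheaf L (Type u)} {a b : G ⟶ G'}
    (h : ∀ (c : E) (f : (lSh L).obj c ⟶ G), f ≫ a = f ≫ b) : a = b := by
  apply Sheaf.hom_ext
  ext c x
  obtain ⟨c⟩ := c
  have h1 := congrArg (lShHomEquiv L G' c) (h c ((lShHomEquiv L G c).symm x))
  rwa [lShHomEquiv_comp_right, lShHomEquiv_comp_right, Equiv.apply_symm_apply] at h1

lemma lSh_hom_ext_of_cover {c : E} {R : Sieve c} (hR : R ∈ L c) {G : Sheaf L (Type u)}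
    {a b : (lSh L).obj c ⟶ G}
    (h : ∀ (c' : E) (g : c' ⟶ c), R g → (lSh L).map g ≫ a = (lSh L).map g ≫ b) : a = b := by
  apply (lShHomEquiv L G c).injective
  apply (((isSheaf_iff_isSheaf_of_type L G.val).1 G.cond).isSeparated R hR).ext
  intro c' g hg
  have h1 := congrArg (lShHomEquiv L G c') (h c' g hg)
  rwa [lShHomEquiv_map_comp, lShHomEquiv_map_comp] at h1

end CommaCoverAux

open CommaCoverAux Opposite

/-- The canonical map `l_K d ⟶ C_p^*(l_J (p d))`. -/
noncomputable def uMapAux (p : D ⥤ C) (K : GrothendieckTopology D) (J : GrothendieckTopology C)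
    (d' : D) : (lSh K).obj d' ⟶ (CpStar p K J).obj ((lSh J).obj (p.obj d')) :=
  (lShHomEquiv K ((CpStar p K J).obj ((lSh J).obj (p.obj d'))) d').symm
    ((toSheafify K (p.op ⋙ ((lSh J).obj (p.obj d')).val)).app (op d')
      ((toSheafify J (yoneda.obj (p.obj d'))).app (op (p.obj d')) (𝟙 (p.obj d'))))

/-- Every object of the comma category `(Sheaf K / C_p^*)` admits a jointly epimorphic
family of morphisms whose sources have second component of the form `l_J(c)` and first
component either initial or of the form `l_K(d)`. -/
theorem comma_cover_by_generators
    (K : GrothendieckTopology D) (J : GrothendieckTopology C)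
    (p : D ⥤ C) (hp : IsComorphismOfSites p K J)
    (X : Comma (𝟭 (Sheaf K (Type u))) (CpStar p K J)) :
    ∃ (ι : Type u) (Z : ι → Comma (𝟭 (Sheaf K (Type u))) (CpStar p K J))
      (φ : ∀ i, Z i ⟶ X),
      JointlyEpi φ ∧
        ∀ i, (∃ c : C, Nonempty ((Z i).right ≅ (lSh J).obj c)) ∧
          (Nonempty (IsInitial ((Z i).left)) ∨
            ∃ d : D, Nonempty ((Z i).left ≅ (lSh K).obj d)) := by
  classical
  haveI : HasInitial (Sheaf K (Type u)) := Sheaf.instHasColimitsOfShape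
  let P : Dᵒᵖ ⥤ Type u := p.op ⋙ X.right.val
  let G : Sheaf K (Type u) := (CpStar p K J).obj X.right
  let b : ∀ (d : D), ((lSh K).obj d ⟶ X.left) → G.val.obj (op d) :=
    fun d f => lShHomEquiv K G d (f ≫ X.hom)
  have key : ∀ (d : D) (f : (lSh K).obj d ⟶ X.left) (d' : D) (g : d' ⟶ d)
      (hg : Presheaf.imageSieve (toSheafify K P) (b d f) g),
      (𝟭 (Sheaf K (Type u))).map ((lSh K).map g ≫ f) ≫ X.hom =
        uMapAux p K J d' ≫
          (CpStar p K J).map ((lShHomEquiv J X.right (p.obj d')).symm hg.choose) := by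
    intro d f d' g hg
    let γ : (lSh J).obj (p.obj d') ⟶ X.right := (lShHomEquiv J X.right (p.obj d')).symm hg.choose
    let Q : Dᵒᵖ ⥤ Type u := p.op ⋙ ((lSh J).obj (p.obj d')).val
    let inner : Q.obj (op d') :=
      (toSheafify J (yoneda.obj (p.obj d'))).app (op (p.obj d')) (𝟙 (p.obj d'))
    apply (lShHomEquiv K G d').injective
    have h1 : lShHomEquiv K G d' ((𝟭 (Sheaf K (Type u))).map ((lSh K).map g ≫ f) ≫ X.hom) =
        G.val.map g.op (b d f) := by
      have e1 : (𝟭 (Sheaf K (Type u))).map ((lSh K).map g ≫ f) ≫ X.hom =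
          (lSh K).map g ≫ (f ≫ X.hom) := by simp
      exact (congrArg (lShHomEquiv K G d') e1).trans (lShHomEquiv_map_comp K g (f ≫ X.hom))
    have h2 : lShHomEquiv K G d' (uMapAux p K J d' ≫ (CpStar p K J).map γ) =
        ((CpStar p K J).map γ).hom.app (op d') ((toSheafify K Q).app (op d') inner) := by
      rw [lShHomEquiv_comp_right]
      exact congrArg (((CpStar p K J).map γ).hom.app (op d')) (Equiv.apply_symm_apply _ _)
    have h3 : ((CpStar p K J).map γ).hom.app (op d') ((toSheafify K Q).app (op d') inner) =
        (toSheafify K P).app (op d') (γ.hom.app (op (p.obj d')) inner) :=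
      (ConcreteCategory.congr_hom (NatTrans.congr_app
        (toSheafify_naturality (J := K) (Functor.whiskerLeft p.op γ.hom)) (op d')) inner).symm
    have h4 : γ.hom.app (op (p.obj d')) inner = hg.choose :=
      (lShHomEquiv_eq_app J γ).symm.trans (Equiv.apply_symm_apply _ _)
    have h5 : (toSheafify K P).app (op d') hg.choose = G.val.map g.op (b d f) := hg.choose_spec
    exact h1.trans
      ((h2.trans (h3.trans ((congrArg ((toSheafify K P).app (op d')) h4).trans h5))).symm)
  refine ⟨(Σ c : C, ((lSh J).obj c ⟶ X.right)) ⊕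
      (Σ (d : D) (f : (lSh K).obj d ⟶ X.left) (d' : D),
        {g : d' ⟶ d // Presheaf.imageSieve (toSheafify K P) (b d f) g}),
    fun i => match i with
      | Sum.inl ⟨c, _⟩ => ⟨⊥_ _, (lSh J).obj c, initial.to _⟩
      | Sum.inr ⟨_, _, d', _⟩ => ⟨(lSh K).obj d', (lSh J).obj (p.obj d'), uMapAux p K J d'⟩,
    fun i => match i with
      | Sum.inl ⟨_, g⟩ => ⟨initial.to _, g, initial.hom_ext _ _⟩
      | Sum.inr ⟨d, f, d', g, hg⟩ =>
          ⟨(lSh K).map g ≫ f, (lShHomEquiv J X.right (p.obj d')).symm hg.choose,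
            key d f d' g hg⟩,
    ?_, ?_⟩
  · intro Y a b' h
    have hleft : a.left = b'.left := by
      apply hom_ext_of_lSh K
      intro d f
      apply lSh_hom_ext_of_cover K (Presheaf.imageSieve_mem K (toSheafify K P) (b d f))
      intro d' g hg
      have h2 := congrArg CommaMorphism.left (h (Sum.inr ⟨d, f, d', ⟨g, hg⟩⟩))
      simpa using h2
    have hright : a.right = b'.right := by
      apply hom_ext_of_lSh J
      intro c g
      have h2 := congrArg CommaMorphism.right (h (Sum.inl ⟨c, g⟩))
      simpa using h2
    exact CommaMorphism.ext hleft hright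
  · rintro (⟨c, g⟩ | ⟨d, f, d', g, hg⟩)
    · exact ⟨⟨c, ⟨Iso.refl _⟩⟩, Or.inl ⟨initialIsInitial⟩⟩
    · exact ⟨⟨p.obj d', ⟨Iso.refl _⟩⟩, Or.inr ⟨d', ⟨Iso.refl _⟩⟩⟩
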